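/- Let r > 0 and let G : [0, x∞] → [r, ∞) be continuous, decreasing, with G(x∞) = r. Let Q(u) = u ln u − u + 1. For any t > 0 and any absolutely continuous trajectory x : [0,t] → ℝ₊ with x(0) = x∞, x(t) = η ∈ (0, x∞), and −r·x_s ≤ ẋ_s ≤ 0 a.e., one has ∫₀ᵗ x_s · Q( (ẋ_s + r x_s)/(G(x_s) x_s) ) ds ≥ (1/r)·∫_η^{x∞} Q(r/G(y)) dy. -/

import Mathlib

open Real MeasureTheory Set Filter

lemma Qfun_anti {u v : ℝ} (hu : 0 ≤ u) (huv : u ≤ v) (hv : v ≤ 1) :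
    v * Real.log v - v + 1 ≤ u * Real.log u - u + 1 := by
  rcases eq_or_lt_of_le hu with h0 | h0
  · simp only [← h0, Real.log_zero, mul_zero, zero_mul, sub_zero, zero_add]
    rcases eq_or_lt_of_le (h0.le.trans huv) with hv0 | hv0
    · simp [← hv0]
    · have hlog : Real.log v ≤ 0 := Real.log_nonpos hv0.le hv
      nlinarith
  · have hanti : AntitoneOn (fun z : ℝ => z * Real.log z - z + 1) (Set.Icc u 1) := by
      apply antitoneOn_of_deriv_nonpos (convex_Icc u 1)
      · exact ((Real.continuous_mul_log.sub continuous_id).add continuous_const).continuousOn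
      · intro z hz
        exact (((Real.hasDerivAt_mul_log (by
          rw [interior_Icc] at hz; exact (h0.trans hz.1).ne')).sub
          (hasDerivAt_id z)).add_const 1).differentiableAt.differentiableWithinAt
      · intro z hz
        rw [interior_Icc] at hz
        have hz0 : 0 < z := h0.trans hz.1
        have : deriv (fun z : ℝ => z * Real.log z - z + 1) z = Real.log z := by
          have h := (((Real.hasDerivAt_mul_log hz0.ne').sub (hasDerivAt_id z)).add_const 1)
          simpa using h.deriv
        rw [this]
        exact Real.log_nonpos hz0.le hz.2.le
    exact hanti ⟨le_refl u, huv.trans hv⟩ ⟨huv, hv⟩ huv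

lemma Qfun_nonneg {u : ℝ} (hu : 0 ≤ u) (hv : u ≤ 1) :
    0 ≤ u * Real.log u - u + 1 := by
  have := Qfun_anti hu hv le_rfl
  simpa using this

lemma Qfun_le_one {u : ℝ} (hu : 0 ≤ u) (hv : u ≤ 1) :
    u * Real.log u - u + 1 ≤ 1 := by
  have := Qfun_anti le_rfl hu hv
  simpa using this

lemma ae_hasDerivAt_primitive (g : ℝ → ℝ) (hmeas : Measurable g)
    (hint : Integrable g) (hg : ∀ᵐ s, g s ≤ 0) :
    ∀ᵐ s, HasDerivAt (fun u => ∫ v in (0:ℝ)..u, g v) (g s) s := by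
  set f : ℝ → ℝ := fun u => ∫ v in (0:ℝ)..u, -g v with hf
  have hii : ∀ a b : ℝ, IntervalIntegrable (fun v => -g v) volume a b :=
    fun a b => (hint.neg).intervalIntegrable
  have hfsub : ∀ a b : ℝ, f b - f a = ∫ v in a..b, -g v := by
    intro a b
    rw [hf]
    exact (intervalIntegral.integral_interval_sub_left (hii 0 b) (hii 0 a))
  have hmono : Monotone f := by
    intro a b hab
    have h1 : 0 ≤ ∫ v in a..b, -g v := by
      apply intervalIntegral.integral_nonneg_of_ae hab
      filter_upwards [hg] with s hs using neg_nonneg.mpr hs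
    have := hfsub a b
    linarith
  have hcont : Continuous f := intervalIntegral.continuous_primitive hii 0
  set ν : Measure ℝ := volume.withDensity (fun s => ENNReal.ofReal (-g s)) with hν
  have hμν : hmono.stieltjesFunction.measure = ν := by
    refine Measure.ext_of_Ioc _ _ (fun a b hab => ?_)
    have hsf : ∀ y, hmono.stieltjesFunction y = f y := by
      intro y
      rw [hmono.stieltjesFunction_eq]
      exact rightLim_eq_of_tendsto
        (hcont.continuousAt.tendsto.mono_left nhdsWithin_le_nhds)
    rw [StieltjesFunction.measure_Ioc, hsf, hsf, hν,
      withDensity_apply _ measurableSet_Ioc]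
    have h1 : ∫⁻ s in Ioc a b, ENNReal.ofReal (-g s)
        = ENNReal.ofReal (∫ s in Ioc a b, -g s) :=
      (ofReal_integral_eq_lintegral_ofReal (hint.neg.integrableOn)
        (by filter_upwards [ae_restrict_of_ae hg] with s hs using neg_nonneg.mpr hs)).symm
    rw [h1, hfsub a b, intervalIntegral.integral_of_le hab.le]
  have hrn : (Measure.rnDeriv hmono.stieltjesFunction.measure volume)
      =ᵐ[volume] (fun s => ENNReal.ofReal (-g s)) := by
    rw [hμν]
    exact Measure.rnDeriv_withDensity volume (by measurability)
  filter_upwards [hmono.ae_hasDerivAt, hrn, hg] with s hs1 hs2 hs3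
  rw [hs2, ENNReal.toReal_ofReal (by linarith)] at hs1
  have : HasDerivAt (fun u => -f u) (g s) s := by
    have h : HasDerivAt (fun u => -f u) (- -g s) s := hs1.neg
    rwa [neg_neg] at h
  have hEq : (fun u => -f u) = (fun u => ∫ v in (0:ℝ)..u, g v) := by
    funext u
    simp [hf, intervalIntegral.integral_neg]
  rwa [hEq] at this

set_option maxHeartbeats 4000000 in
/-- Lower bound on the large deviation cost of a downward trajectory.
If `x` is absolutely continuous on `[0,t]` with a.e. derivative `x'`
satisfying `−r·x_s ≤ x'_s ≤ 0`, `x(0) = x∞`, `x(t) = η ∈ (0,x∞)`, and `G` is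
continuous, antitone on `[0,x∞]` with values `≥ r` and `G(x∞) = r`, then
`∫₀ᵗ x_s·Q((x'_s + r x_s)/(G(x_s)·x_s)) ds ≥ (1/r)·∫_η^{x∞} Q(r/G(y)) dy`,
where `Q(u) = u·ln u − u + 1`. -/
theorem ldp_cost_lower_bound (r xInf η t : ℝ) (hr : 0 < r) (hη : 0 < η)
    (hηx : η < xInf) (ht : 0 < t)
    (G Q x x' : ℝ → ℝ)
    (hQ : ∀ u, Q u = u * Real.log u - u + 1)
    (hGcont : ContinuousOn G (Set.Icc 0 xInf))
    (hGanti : AntitoneOn G (Set.Icc 0 xInf))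
    (hGr : ∀ y ∈ Set.Icc (0 : ℝ) xInf, r ≤ G y)
    (hGx : G xInf = r)
    (hx'int : IntervalIntegrable x' MeasureTheory.volume 0 t)
    (hAC : ∀ s ∈ Set.Icc (0 : ℝ) t, x s = xInf + ∫ u in (0 : ℝ)..s, x' u)
    (hx0 : x 0 = xInf) (hxt : x t = η)
    (hxpos : ∀ s ∈ Set.Icc (0 : ℝ) t, 0 ≤ x s)
    (hderiv : ∀ᵐ s ∂MeasureTheory.volume,
      s ∈ Set.Icc (0 : ℝ) t → -r * x s ≤ x' s ∧ x' s ≤ 0) :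
    (∫ s in (0 : ℝ)..t, x s * Q ((x' s + r * x s) / (G (x s) * x s))) ≥
      (1 / r) * ∫ y in η..xInf, Q (r / G y) := by
  have hxInf0 : 0 < xInf := hη.trans hηx
  -- the function ψ
  set ψ : ℝ → ℝ := fun y => Q (r / G y) with hψdef
  have hQfun : Q = fun u => u * Real.log u - u + 1 := funext hQ
  have hQc : Continuous Q := by
    rw [hQfun]
    exact (Real.continuous_mul_log.sub continuous_id).add continuous_const
  have hψnn : ∀ y ∈ Icc η xInf, 0 ≤ ψ y ∧ ψ y ≤ 1 := by
    intro y hy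
    have hy' : y ∈ Icc (0:ℝ) xInf := ⟨hη.le.trans hy.1, hy.2⟩
    have hGy : r ≤ G y := hGr y hy'
    have hGy0 : 0 < G y := hr.trans_le hGy
    have h1 : r / G y ≤ 1 := (div_le_one hGy0).mpr hGy
    have h0 : 0 ≤ r / G y := div_nonneg hr.le hGy0.le
    rw [hψdef]
    simp only [hQ]
    exact ⟨Qfun_nonneg h0 h1, Qfun_le_one h0 h1⟩
  have hψcont : ContinuousOn ψ (Icc η xInf) := by
    rw [hψdef]
    apply hQc.comp_continuousOn
    apply continuousOn_const.div
      (hGcont.mono (Icc_subset_Icc hη.le le_rfl))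
    intro y hy
    exact (hr.trans_le (hGr y ⟨hη.le.trans hy.1, hy.2⟩)).ne'
  -- interval integrability conventions
  have hx'sub : ∀ a b, a ∈ Icc (0:ℝ) t → b ∈ Icc (0:ℝ) t →
      IntervalIntegrable x' volume a b := by
    intro a b ha hb
    apply hx'int.mono_set
    rw [uIcc_of_le ht.le]
    exact uIcc_subset_Icc ⟨ha.1, ha.2⟩ ⟨hb.1, hb.2⟩
  have hsub : ∀ a b, a ∈ Icc (0:ℝ) t → b ∈ Icc (0:ℝ) t →
      x b - x a = ∫ u in a..b, x' u := by
    intro a b ha hb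
    rw [hAC a ha, hAC b hb]
    have := intervalIntegral.integral_interval_sub_left
      (hx'sub 0 b (left_mem_Icc.mpr ht.le) hb) (hx'sub 0 a (left_mem_Icc.mpr ht.le) ha)
    linarith [this]
  -- x is antitone on [0,t]
  have hanti : ∀ a b, a ∈ Icc (0:ℝ) t → b ∈ Icc (0:ℝ) t → a ≤ b → x b ≤ x a := by
    intro a b ha hb hab
    have h1 : 0 ≤ ∫ u in a..b, -x' u := by
      apply intervalIntegral.integral_nonneg_of_ae_restrict hab
      have h2 : ∀ᵐ s ∂(volume.restrict (Icc a b)), s ∈ Icc a b :=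
        ae_restrict_mem measurableSet_Icc
      filter_upwards [h2, ae_restrict_of_ae hderiv] with s hs1 hs2
      have : s ∈ Icc (0:ℝ) t := ⟨ha.1.trans hs1.1, hs1.2.trans hb.2⟩
      simpa using (hs2 this).2
    rw [intervalIntegral.integral_neg] at h1
    have := hsub a b ha hb
    linarith
  have hxle : ∀ s ∈ Icc (0:ℝ) t, η ≤ x s ∧ x s ≤ xInf := by
    intro s hs
    constructor
    · rw [← hxt]; exact hanti s t hs (right_mem_Icc.mpr ht.le) hs.2
    · rw [← hx0]; exact hanti 0 s (left_mem_Icc.mpr ht.le) hs hs.1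
  -- measurable representative of x'
  have hx'sm : AEStronglyMeasurable x' (volume.restrict (Ioc 0 t)) :=
    hx'int.1.aestronglyMeasurable
  set g : ℝ → ℝ := (Ioc (0:ℝ) t).indicator hx'sm.mk with hgdef
  have hgmeas : Measurable g :=
    (hx'sm.stronglyMeasurable_mk.measurable).indicator measurableSet_Ioc
  have hgae : ∀ᵐ s, s ∈ Ioc (0:ℝ) t → x' s = g s := by
    have h1 := (ae_restrict_iff' measurableSet_Ioc).mp hx'sm.ae_eq_mk
    filter_upwards [h1] with s hs hmem
    rw [hs hmem, hgdef, indicator_of_mem hmem]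
  have hg0 : ∀ s, s ∉ Ioc (0:ℝ) t → g s = 0 := by
    intro s hs; rw [hgdef, indicator_of_notMem hs]
  have hgint : Integrable g := by
    have h1 : IntegrableOn hx'sm.mk (Ioc (0:ℝ) t) volume :=
      (hx'int.1.congr hx'sm.ae_eq_mk)
    exact h1.integrable_indicator measurableSet_Ioc
  have hgle : ∀ᵐ s, g s ≤ 0 := by
    filter_upwards [hgae, hderiv] with s h1 h2
    by_cases hs : s ∈ Ioc (0:ℝ) t
    · rw [← h1 hs]; exact (h2 ⟨hs.1.le, hs.2⟩).2
    · rw [hg0 s hs]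
  have hglb : ∀ᵐ s, -(r * xInf) ≤ g s := by
    filter_upwards [hgae, hderiv] with s h1 h2
    by_cases hs : s ∈ Ioc (0:ℝ) t
    · rw [← h1 hs]
      have h3 := (h2 ⟨hs.1.le, hs.2⟩).1
      have h4 := (hxle s ⟨hs.1.le, hs.2⟩).2
      nlinarith
    · rw [hg0 s hs]; nlinarith
  have habs : ∀ᵐ s, |g s| ≤ r * xInf := by
    filter_upwards [hgle, hglb] with s h1 h2
    rw [abs_le]; exact ⟨h2, h1.trans (by positivity)⟩
  -- the primitive X
  set X : ℝ → ℝ := fun u => xInf + ∫ v in (0:ℝ)..u, g v with hXdef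
  have hXeq : ∀ s ∈ Icc (0:ℝ) t, X s = x s := by
    intro s hs
    simp only [hXdef]
    rw [hAC s hs]
    congr 1
    apply intervalIntegral.integral_congr_ae
    filter_upwards [hgae] with u h1 h2
    rw [uIoc_of_le hs.1] at h2
    exact (h1 ⟨h2.1, h2.2.trans hs.2⟩).symm
  have hX0 : X 0 = xInf := by simp [hXdef]
  have hXsub : ∀ a b : ℝ, X b - X a = ∫ v in a..b, g v := by
    intro a b
    rw [hXdef]
    have := intervalIntegral.integral_interval_sub_left
      (hgint.intervalIntegrable (a := 0) (b := b)) (hgint.intervalIntegrable (a := 0) (b := a))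
    dsimp only
    linarith [this]
  have hXanti : Antitone X := by
    intro a b hab
    have h1 : 0 ≤ ∫ v in a..b, -g v := by
      apply intervalIntegral.integral_nonneg_of_ae hab
      filter_upwards [hgle] with s hs using neg_nonneg.mpr hs
    rw [intervalIntegral.integral_neg] at h1
    have := hXsub a b
    linarith
  have hC0 : (0:ℝ) ≤ r * xInf := by positivity
  have hXlipb : ∀ a b : ℝ, a ≤ b → |X b - X a| ≤ r * xInf * (b - a) := by
    intro a b hab
    rw [hXsub a b]
    calc |∫ v in a..b, g v| ≤ ∫ v in a..b, |g v| :=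
          intervalIntegral.abs_integral_le_integral_abs hab
      _ ≤ ∫ v in a..b, (r * xInf) := by
          apply intervalIntegral.integral_mono_ae hab hgint.abs.intervalIntegrable
            intervalIntegrable_const
          exact habs
      _ = r * xInf * (b - a) := by
          rw [intervalIntegral.integral_const, smul_eq_mul]; ring
  have hXlip : LipschitzWith (r * xInf).toNNReal X := by
    apply LipschitzWith.of_dist_le_mul
    intro a b
    rw [Real.dist_eq, Real.dist_eq, Real.coe_toNNReal _ hC0]
    rcases le_total a b with h | h
    · rw [abs_sub_comm]
      calc |X b - X a| ≤ r * xInf * (b - a) := hXlipb a b h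
        _ ≤ r * xInf * |a - b| := by
            rw [abs_sub_comm, abs_of_nonneg (by linarith)]
    · calc |X a - X b| ≤ r * xInf * (a - b) := hXlipb b a h
        _ ≤ r * xInf * |a - b| := by
            rw [abs_of_nonneg (by linarith)]
  have hXcont : Continuous X := hXlip.continuous
  have hxcont : ContinuousOn x (Icc 0 t) :=
    hXcont.continuousOn.congr (fun s hs => (hXeq s hs).symm)
  -- a.e. derivative of X
  have hprim : ∀ᵐ s, HasDerivAt X (g s) s := by
    filter_upwards [ae_hasDerivAt_primitive g hgmeas hgint hgle] with s hs
    exact hs.const_add xInf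
  -- bad set
  have hB : volume {s | ¬ (HasDerivAt X (g s) s ∧ g s ≤ 0)} = 0 := by
    have h1 : ∀ᵐ s, HasDerivAt X (g s) s ∧ g s ≤ 0 := by
      filter_upwards [hprim, hgle] with s h1 h2 using ⟨h1, h2⟩
    exact h1
  obtain ⟨N, hNsub, hNmeas, hNnull⟩ := exists_measurable_superset_of_null hB
  set E : Set ℝ := (Ioo 0 t ∩ {s | g s < 0}) \ N with hEdef
  have hEmeas : MeasurableSet E :=
    ((measurableSet_Ioo.inter (measurableSet_lt hgmeas measurable_const))).diff hNmeas
  have hEP : ∀ s ∈ E, HasDerivAt X (g s) s ∧ g s < 0 := by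
    intro s hs
    have h1 : s ∉ N := hs.2
    have h2 : ¬ ¬ (HasDerivAt X (g s) s ∧ g s ≤ 0) := fun h => h1 (hNsub h)
    exact ⟨(not_not.mp h2).1, hs.1.2⟩
  have hEIoc : E ⊆ Ioc 0 t := fun s hs => ⟨hs.1.1.1, hs.1.1.2.le⟩
  -- injectivity on E
  have hInj : InjOn X E := by
    intro a ha b hb hXab
    by_contra hne
    rcases lt_or_gt_of_ne hne with hlt | hlt
    · -- a < b, X constant on [a,b]
      have hconst : ∀ y ∈ Icc a b, X y = X a := by
        intro y hy
        have h1 : X y ≤ X a := hXanti hy.1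
        have h2 : X b ≤ X y := hXanti hy.2
        linarith [hXab.le, hXab.ge]
      have hd0 : HasDerivWithinAt X 0 (Icc a b) a := by
        apply (hasDerivWithinAt_const a (Icc a b) (X a)).congr
        · exact fun y hy => hconst y hy
        · exact hconst a ⟨le_rfl, hlt.le⟩
      have hdg : HasDerivWithinAt X (g a) (Icc a b) a :=
        (hEP a ha).1.hasDerivWithinAt
      have hud : UniqueDiffWithinAt ℝ (Icc a b) a :=
        (uniqueDiffOn_Icc hlt) a ⟨le_rfl, hlt.le⟩
      exact absurd ((hdg.derivWithin hud).symm.trans (hd0.derivWithin hud))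
        (hEP a ha).2.ne
    · have hconst : ∀ y ∈ Icc b a, X y = X b := by
        intro y hy
        have h1 : X y ≤ X b := hXanti hy.1
        have h2 : X a ≤ X y := hXanti hy.2
        linarith [hXab.le, hXab.ge]
      have hd0 : HasDerivWithinAt X 0 (Icc b a) b := by
        apply (hasDerivWithinAt_const b (Icc b a) (X b)).congr
        · exact fun y hy => hconst y hy
        · exact hconst b ⟨le_rfl, hlt.le⟩
      have hdg : HasDerivWithinAt X (g b) (Icc b a) b :=
        (hEP b hb).1.hasDerivWithinAt
      have hud : UniqueDiffWithinAt ℝ (Icc b a) b :=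
        (uniqueDiffOn_Icc hlt) b ⟨le_rfl, hlt.le⟩
      exact absurd ((hdg.derivWithin hud).symm.trans (hd0.derivWithin hud))
        (hEP b hb).2.ne
  -- zero-derivative set has null image
  set Z : Set ℝ := (Ioo 0 t \ N) ∩ {s | g s = 0} with hZdef
  have hZimg : volume (X '' Z) = 0 := by
    have h1 : ∀ s ∈ Z, HasFDerivWithinAt X ((1 : ℝ →L[ℝ] ℝ).smulRight (0:ℝ)) Z s := by
      intro s hs
      have h2 : ¬ ¬ (HasDerivAt X (g s) s ∧ g s ≤ 0) := fun h => hs.1.2 (hNsub h)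
      have h3 := (not_not.mp h2).1
      have h4 : g s = 0 := hs.2
      rw [h4] at h3
      exact (hasDerivWithinAt_iff_hasFDerivWithinAt.mp h3.hasDerivWithinAt)
    exact addHaar_image_eq_zero_of_det_fderivWithin_eq_zero volume h1
      (fun s _ => by simp [ContinuousLinearMap.det_toSpanSingleton])
  have hNimg : volume (X '' N) = 0 := by
    have h1 := hXlip.hausdorffMeasure_image_le (by norm_num : (0:ℝ) ≤ 1) N
    rw [hausdorffMeasure_real] at h1
    have h2 : volume (X '' N) ≤ 0 := by simpa [hNnull] using h1
    exact le_antisymm h2 zero_le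
  -- covering
  have hXt : X t = η := by rw [hXeq t (right_mem_Icc.mpr ht.le), hxt]
  have hcover : Ioo η xInf ⊆ X '' E ∪ (X '' Z ∪ X '' N) := by
    intro y hy
    have h1 : y ∈ Icc (X t) (X 0) := by
      rw [hX0, hXt]; exact ⟨hy.1.le, hy.2.le⟩
    obtain ⟨s, hs, hXs⟩ := intermediate_value_Icc' ht.le hXcont.continuousOn h1
    have hs0 : s ≠ 0 := by
      rintro rfl
      rw [hX0] at hXs
      exact absurd hXs.symm hy.2.ne
    have hst : s ≠ t := by
      rintro rfl
      rw [hXt] at hXs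
      exact absurd hXs.symm hy.1.ne'
    have hsIoo : s ∈ Ioo (0:ℝ) t := ⟨lt_of_le_of_ne hs.1 (Ne.symm hs0), lt_of_le_of_ne hs.2 hst⟩
    by_cases hsN : s ∈ N
    · exact Or.inr (Or.inr ⟨s, hsN, hXs⟩)
    · have hP : HasDerivAt X (g s) s ∧ g s ≤ 0 := not_not.mp (fun h => hsN (hNsub h))
      rcases lt_or_eq_of_le hP.2 with hlt | heq
      · exact Or.inl ⟨s, ⟨⟨hsIoo, hlt⟩, hsN⟩, hXs⟩
      · exact Or.inr (Or.inl ⟨s, ⟨⟨hsIoo, hsN⟩, heq⟩, hXs⟩)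
  have hEimg_sub : X '' E ⊆ Icc η xInf := by
    rintro _ ⟨s, hs, rfl⟩
    have hsI : s ∈ Icc (0:ℝ) t := ⟨(hEIoc hs).1.le, (hEIoc hs).2⟩
    rw [hXeq s hsI]
    exact ⟨(hxle s hsI).1, (hxle s hsI).2⟩
  have hpair : volume ({η, xInf} : Set ℝ) = 0 :=
    Set.Countable.measure_zero ((Set.countable_singleton xInf).insert η) volume
  have haeset : X '' E =ᵐ[volume] Ioo η xInf := by
    rw [MeasureTheory.ae_eq_set]
    constructor
    · refine measure_mono_null ?_ hpair
      intro y hy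
      have h1 := hEimg_sub hy.1
      have h2 := hy.2
      simp only [mem_Ioo, not_and, not_lt] at h2
      rcases eq_or_lt_of_le h1.1 with he | hl
      · exact Or.inl he.symm
      · exact Or.inr (le_antisymm h1.2 (h2 hl))
    · refine measure_mono_null ?_ (measure_union_null hZimg hNimg)
      intro y hy
      rcases hcover hy.1 with h | h
      · exact absurd h hy.2
      · exact h
  -- continuity facts for integrands
  have hψXcont : ContinuousOn (fun s => ψ (X s)) (Icc 0 t) := by
    apply hψcont.comp hXcont.continuousOn
    intro s hs
    rw [hXeq s hs]
    exact ⟨(hxle s hs).1, (hxle s hs).2⟩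
  have hψXsm : AEStronglyMeasurable (fun s => ψ (X s)) (volume.restrict (Ioc 0 t)) :=
    (hψXcont.aestronglyMeasurable measurableSet_Icc).mono_measure
      (Measure.restrict_mono Ioc_subset_Icc_self le_rfl)
  have hψXbd : ∀ s ∈ Ioc (0:ℝ) t, 0 ≤ ψ (X s) ∧ ψ (X s) ≤ 1 := by
    intro s hs
    have hsI : s ∈ Icc (0:ℝ) t := ⟨hs.1.le, hs.2⟩
    rw [hXeq s hsI]
    exact hψnn (x s) ⟨(hxle s hsI).1, (hxle s hsI).2⟩
  have hint1 : IntegrableOn (fun s => (-g s) * ψ (X s)) (Ioc 0 t) := by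
    apply Integrable.mono' (g := fun _ => r * xInf * 1)
      (integrableOn_const measure_Ioc_lt_top.ne)
    · exact (hgmeas.neg.aestronglyMeasurable.restrict).mul hψXsm
    · filter_upwards [ae_restrict_of_ae habs, ae_restrict_mem measurableSet_Ioc] with s h1 h2
      rw [Real.norm_eq_abs]
      calc |(-g s) * ψ (X s)| = |g s| * |ψ (X s)| := by rw [abs_mul, abs_neg]
        _ ≤ (r * xInf) * 1 := by
            apply mul_le_mul h1 _ (abs_nonneg _) hC0
            rw [abs_le]
            exact ⟨by linarith [(hψXbd s h2).1], (hψXbd s h2).2⟩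
  have hEIoo : E ⊆ Ioo 0 t := fun s hs => hs.1.1
  -- step C : change of variables
  have key1 : ∫ y in η..xInf, ψ y ≤ ∫ s in (0:ℝ)..t, (-x' s) * ψ (x s) := by
    have hchg : ∫ y in X '' E, ψ y = ∫ s in E, |g s| • ψ (X s) :=
      integral_image_eq_integral_abs_deriv_smul hEmeas
        (fun s hs => ((hEP s hs).1).hasDerivWithinAt) hInj ψ
    have e1 : ∫ y in η..xInf, ψ y = ∫ y in Ioo η xInf, ψ y := by
      rw [intervalIntegral.integral_of_le hηx.le, integral_Ioc_eq_integral_Ioo]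
    have e2 : ∫ y in Ioo η xInf, ψ y = ∫ y in X '' E, ψ y :=
      (setIntegral_congr_set haeset).symm
    have e3 : ∫ s in E, |g s| • ψ (X s) = ∫ s in E, (-g s) * ψ (X s) := by
      apply setIntegral_congr_fun hEmeas
      intro s hs
      simp only [smul_eq_mul]
      rw [abs_of_neg (hEP s hs).2]
    have e4 : ∫ s in E, (-g s) * ψ (X s) ≤ ∫ s in Ioc 0 t, (-g s) * ψ (X s) := by
      apply setIntegral_mono_set hint1
      · filter_upwards [ae_restrict_of_ae hgle, ae_restrict_mem measurableSet_Ioc] with s h1 h2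
        exact mul_nonneg (neg_nonneg.mpr h1) (hψXbd s h2).1
      · exact HasSubset.Subset.eventuallyLE hEIoc
    have e5 : ∫ s in Ioc 0 t, (-g s) * ψ (X s) = ∫ s in (0:ℝ)..t, (-x' s) * ψ (x s) := by
      rw [intervalIntegral.integral_of_le ht.le]
      apply setIntegral_congr_ae measurableSet_Ioc
      filter_upwards [hgae] with s h1 h2
      rw [← h1 h2, hXeq s ⟨h2.1.le, h2.2⟩]
    rw [e1, e2, hchg, e3]
    rw [e5] at e4
    exact e4
  -- pointwise comparison
  have hptwise : ∀ s ∈ Icc (0:ℝ) t, -r * x s ≤ x' s → x' s ≤ 0 →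
      (1/r) * ((-x' s) * ψ (x s)) ≤ x s * Q ((x' s + r * x s) / (G (x s) * x s)) ∧
      0 ≤ x s * Q ((x' s + r * x s) / (G (x s) * x s)) ∧
      x s * Q ((x' s + r * x s) / (G (x s) * x s)) ≤ xInf := by
    intro s hs h1 h2
    obtain ⟨ha1, ha2⟩ := hxle s hs
    have ha0 : 0 < x s := hη.trans_le ha1
    have hc : r ≤ G (x s) := hGr (x s) ⟨ha0.le, ha2⟩
    have hc0 : 0 < G (x s) := hr.trans_le hc
    have hca : 0 < G (x s) * x s := mul_pos hc0 ha0
    set u := (x' s + r * x s) / (G (x s) * x s) with hudef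
    have hu0 : 0 ≤ u := div_nonneg (by linarith) hca.le
    have hurc : u ≤ r / G (x s) := by
      rw [hudef, div_le_div_iff₀ hca hc0]
      nlinarith
    have hrc1 : r / G (x s) ≤ 1 := (div_le_one hc0).mpr hc
    have hQ1 : Q (r / G (x s)) ≤ Q u := by
      rw [hQ, hQ]; exact Qfun_anti hu0 hurc hrc1
    have hQ2 : 0 ≤ Q (r / G (x s)) := by
      rw [hQ]; exact Qfun_nonneg (div_nonneg hr.le hc0.le) hrc1
    have hQ3 : Q u ≤ 1 := by
      rw [hQ]; exact Qfun_le_one hu0 (hurc.trans hrc1)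
    have hQ4 : 0 ≤ Q u := by
      rw [hQ]; exact Qfun_nonneg hu0 (hurc.trans hrc1)
    refine ⟨?_, mul_nonneg ha0.le hQ4, ?_⟩
    · have hψx : ψ (x s) = Q (r / G (x s)) := rfl
      rw [hψx]
      have hb : (-x' s) / r ≤ x s := by
        rw [div_le_iff₀ hr]; nlinarith
      calc (1/r) * ((-x' s) * Q (r / G (x s)))
          = ((-x' s)/r) * Q (r / G (x s)) := by ring
        _ ≤ x s * Q (r / G (x s)) := mul_le_mul_of_nonneg_right hb hQ2
        _ ≤ x s * Q u := mul_le_mul_of_nonneg_left hQ1 ha0.le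
    · calc x s * Q u ≤ x s * 1 := mul_le_mul_of_nonneg_left hQ3 ha0.le
        _ ≤ xInf := by linarith
  -- integrability of the two interval integrands
  have hxsm : AEStronglyMeasurable x (volume.restrict (Ioc 0 t)) :=
    (hxcont.aestronglyMeasurable measurableSet_Icc).mono_measure
      (Measure.restrict_mono Ioc_subset_Icc_self le_rfl)
  have hGxcont : ContinuousOn (fun s => G (x s) * x s) (Icc 0 t) := by
    apply ContinuousOn.mul _ hxcont
    apply hGcont.comp hxcont
    intro s hs
    exact ⟨hxpos s hs, (hxle s hs).2⟩
  have hGxsm : AEStronglyMeasurable (fun s => G (x s) * x s) (volume.restrict (Ioc 0 t)) :=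
    (hGxcont.aestronglyMeasurable measurableSet_Icc).mono_measure
      (Measure.restrict_mono Ioc_subset_Icc_self le_rfl)
  have hnum_sm : AEStronglyMeasurable (fun s => x' s + r * x s)
      (volume.restrict (Ioc 0 t)) := hx'sm.add (hxsm.const_mul r)
  have hquot_sm : AEStronglyMeasurable
      (fun s => (x' s + r * x s) / (G (x s) * x s))
      (volume.restrict (Ioc 0 t)) :=
    (hnum_sm.aemeasurable.div hGxsm.aemeasurable).aestronglyMeasurable
  have hrhs_sm : AEStronglyMeasurable
      (fun s => x s * Q ((x' s + r * x s) / (G (x s) * x s)))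
      (volume.restrict (Ioc 0 t)) :=
    hxsm.mul (hQc.comp_aestronglyMeasurable hquot_sm)
  have hrhs_int : IntegrableOn
      (fun s => x s * Q ((x' s + r * x s) / (G (x s) * x s))) (Ioc 0 t) := by
    apply Integrable.mono' (g := fun _ => xInf)
      (integrableOn_const measure_Ioc_lt_top.ne) hrhs_sm
    filter_upwards [ae_restrict_of_ae hderiv, ae_restrict_mem measurableSet_Ioc] with s h1 h2
    have hsI : s ∈ Icc (0:ℝ) t := ⟨h2.1.le, h2.2⟩
    obtain ⟨hp1, hp2, hp3⟩ := hptwise s hsI (h1 hsI).1 (h1 hsI).2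
    rw [Real.norm_eq_abs, abs_of_nonneg hp2]
    exact hp3
  have hrhs_ii : IntervalIntegrable
      (fun s => x s * Q ((x' s + r * x s) / (G (x s) * x s))) volume 0 t :=
    (intervalIntegrable_iff_integrableOn_Ioc_of_le ht.le).mpr hrhs_int
  have hlhs_int : IntegrableOn
      (fun s => (1/r) * ((-x' s) * ψ (x s))) (Ioc 0 t) := by
    apply Integrable.congr (hint1.const_mul (1/r))
    filter_upwards [ae_restrict_of_ae hgae, ae_restrict_mem measurableSet_Ioc] with s h1 h2
    rw [← h1 h2, hXeq s ⟨h2.1.le, h2.2⟩]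
  have hlhs_ii : IntervalIntegrable
      (fun s => (1/r) * ((-x' s) * ψ (x s))) volume 0 t :=
    (intervalIntegrable_iff_integrableOn_Ioc_of_le ht.le).mpr hlhs_int
  have key2 : ∫ s in (0:ℝ)..t, (1/r) * ((-x' s) * ψ (x s)) ≤
      ∫ s in (0:ℝ)..t, x s * Q ((x' s + r * x s) / (G (x s) * x s)) := by
    apply intervalIntegral.integral_mono_ae_restrict ht.le hlhs_ii hrhs_ii
    filter_upwards [ae_restrict_of_ae hderiv, ae_restrict_mem measurableSet_Icc] with s h1 h2
    exact (hptwise s h2 (h1 h2).1 (h1 h2).2).1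
  -- conclusion
  rw [ge_iff_le]
  calc (1/r) * ∫ y in η..xInf, ψ y
      ≤ (1/r) * ∫ s in (0:ℝ)..t, (-x' s) * ψ (x s) :=
        mul_le_mul_of_nonneg_left key1 (by positivity)
    _ = ∫ s in (0:ℝ)..t, (1/r) * ((-x' s) * ψ (x s)) :=
        (intervalIntegral.integral_const_mul _ _).symm
    _ ≤ ∫ s in (0:ℝ)..t, x s * Q ((x' s + r * x s) / (G (x s) * x s)) := key2
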